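/- Let Ω be a domain in ℂ^n containing the origin 0 and let φ be a plurisubharmonic function on Ω with ν_φ(0) > 0. Let s > t > -n be real numbers such that a := c_t(φ) < c_s(φ). Then for every γ with a < γ < c_s(φ), the plurisubharmonic function φ_γ := max{φ, ((s-t)/(γ-a))·log‖z‖} satisfies c_t(φ_γ) = a. -/

import Mathlib

open MeasureTheory Filter Metric Topology Complex
open scoped ENNReal EReal

noncomputable section

/-- `ℂ^n` with its Euclidean (Hermitian) norm. -/
abbrev Cn (n : ℕ) : Type := EuclideanSpace ℂ (Fin n)

/-- Lebesgue measure on `ℂ^n ≅ ℝ^{2n}`. -/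
instance Cn.measureSpace (n : ℕ) : MeasureSpace (Cn n) where
  toMeasurableSpace := inferInstance
  volume := Measure.map (MeasurableEquiv.toLp 2 (Fin n → ℂ)) volume

/-- Extended-real-valued logarithm, sending `0` (and negative numbers) to `-∞`. -/
def elog (x : ℝ) : EReal := if x ≤ 0 then (⊥ : EReal) else ((Real.log x : ℝ) : EReal)

/-- `exp : EReal → ℝ≥0∞`, with `exp (-∞) = 0` and `exp (+∞) = +∞`. -/
def erealExp (x : EReal) : ℝ≥0∞ :=
  if x = ⊤ then ⊤ else if x = ⊥ then 0 else ENNReal.ofReal (Real.exp x.toReal)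

/-- The positive part of an extended real number, as an element of `ℝ≥0∞`. -/
def erealPosPart (x : EReal) : ℝ≥0∞ := if x = ⊤ then ⊤ else ENNReal.ofReal x.toReal

/-- The integral of an `EReal`-valued function: upper integral of the positive part minus the
upper integral of the negative part. -/
def erealIntegral {α : Type*} [MeasurableSpace α] (μ : Measure α) (f : α → EReal) : EReal :=
  ((∫⁻ a, erealPosPart (f a) ∂μ : ℝ≥0∞) : EReal) -
    ((∫⁻ a, erealPosPart (-(f a)) ∂μ : ℝ≥0∞) : EReal)

/-- A function `f : ℂ → [-∞, ∞)` is subharmonic on an open set `U ⊆ ℂ` if it is upper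
semicontinuous on `U` and satisfies the sub-mean value inequality on circles contained in `U`
(written in the form `2π · f(z) ≤ ∫_0^{2π} f(z + r e^{iθ}) dθ`). -/
def SubhOn (f : ℂ → EReal) (U : Set ℂ) : Prop :=
  UpperSemicontinuousOn f U ∧
  ∀ z ∈ U, ∀ r : ℝ, 0 < r → closedBall z r ⊆ U →
    ((2 * Real.pi : ℝ) : EReal) * f z ≤
      erealIntegral (volume.restrict (Set.Ioc (0:ℝ) (2 * Real.pi)))
        (fun θ : ℝ => f (z + (r : ℂ) * Complex.exp (θ * Complex.I)))

/-- A function `φ : ℂ^n → [-∞, ∞)` is plurisubharmonic on `Ω` if it is upper semicontinuous on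
`Ω`, not identically `-∞`, never `+∞`, and its restriction to every complex line is subharmonic. -/
def PshOn {n : ℕ} (φ : Cn n → EReal) (Ω : Set (Cn n)) : Prop :=
  UpperSemicontinuousOn φ Ω ∧ (∃ z ∈ Ω, φ z ≠ ⊥) ∧ (∀ z ∈ Ω, φ z ≠ ⊤) ∧
  ∀ a v : Cn n, SubhOn (fun w : ℂ => φ (a + w • v)) {w : ℂ | a + w • v ∈ Ω}

/-- A domain in `ℂ^n`: a nonempty connected open set. -/
def IsCnDomain {n : ℕ} (Ω : Set (Cn n)) : Prop := IsOpen Ω ∧ IsConnected Ω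

/-- The Lelong number of `φ` at the origin: `ν_φ(0) = liminf_{z → 0} φ(z) / log ‖z‖`. -/
def lelong {n : ℕ} (φ : Cn n → EReal) : EReal :=
  liminf (fun z : Cn n => φ z * (((Real.log ‖z‖)⁻¹ : ℝ) : EReal)) (𝓝[≠] (0 : Cn n))

/-- The Lelong number at `0` of the restriction of `φ` to the complex line through `0` with
direction `v`: `ν_{φ|_l}(0) = liminf_{λ → 0} φ(λ v) / log |λ|`. -/
def lelongLine {n : ℕ} (φ : Cn n → EReal) (v : Cn n) : EReal :=
  liminf (fun w : ℂ => φ (w • v) * (((Real.log ‖w‖)⁻¹ : ℝ) : EReal)) (𝓝[≠] (0 : ℂ))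

/-- `‖z‖^{2t} e^{-2cφ}` is (Lebesgue) integrable on some neighborhood of the origin. -/
def lctIntegrable {n : ℕ} (t c : ℝ) (φ : Cn n → EReal) : Prop :=
  ∃ U ∈ 𝓝 (0 : Cn n),
    (∫⁻ z in U, ENNReal.ofReal (‖z‖ ^ (2 * t)) *
        erealExp (((-(2 * c) : ℝ) : EReal) * φ z) ∂volume) < ⊤

/-- The weighted log canonical threshold
`c_t(φ) = sup {c ≥ 0 : ‖z‖^{2t} e^{-2cφ}` is integrable near `0}`, as an element of `[0, ∞]`. -/
def lct {n : ℕ} (t : ℝ) (φ : Cn n → EReal) : ℝ≥0∞ :=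
  ⨆ c ∈ {c : ℝ | 0 ≤ c ∧ lctIntegrable t c φ}, ENNReal.ofReal c


/-! ### Auxiliary lemmas for `statement8` -/

private lemma erealExp_coe' (r : ℝ) : erealExp (r : EReal) = ENNReal.ofReal (Real.exp r) := by
  simp [erealExp]

private lemma erealExp_bot' : erealExp ⊥ = 0 := by simp [erealExp]

private lemma erealExp_top' : erealExp ⊤ = ⊤ := by simp [erealExp]

private lemma erealExp_mono' : Monotone erealExp := by
  intro x y h
  induction x using EReal.rec with
  | bot => simp [erealExp_bot']
  | top => rw [top_le_iff.mp h]
  | coe r =>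
    induction y using EReal.rec with
    | bot => exact absurd h (by simp)
    | top => simp [erealExp_top']
    | coe q =>
      rw [erealExp_coe', erealExp_coe']
      exact ENNReal.ofReal_le_ofReal (Real.exp_le_exp.mpr (by exact_mod_cast h))

private lemma ereal_mul_anti {r : ℝ} (hr : r < 0) : Antitone fun x : EReal => (r : EReal) * x := by
  intro x y hxy
  induction y using EReal.rec with
  | bot => rw [le_bot_iff.mp hxy]
  | top => simp only; rw [EReal.coe_mul_top_of_neg hr]; exact bot_le
  | coe q =>
    induction x using EReal.rec with
    | bot => simp only; rw [EReal.coe_mul_bot_of_neg hr]; exact le_top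
    | top => exact absurd hxy ((EReal.coe_lt_top q).not_ge)
    | coe p =>
      simp only
      rw [← EReal.coe_mul, ← EReal.coe_mul, EReal.coe_le_coe_iff]
      exact mul_le_mul_of_nonpos_left (by exact_mod_cast hxy) hr.le

private lemma ereal_mul_mono {r : ℝ} (hr : 0 < r) : Monotone fun x : EReal => (r : EReal) * x := by
  intro x y hxy
  induction x using EReal.rec with
  | bot => simp only; rw [EReal.coe_mul_bot_of_pos hr]; exact bot_le
  | top => rw [top_le_iff.mp hxy]
  | coe p =>
    induction y using EReal.rec with
    | bot => exact absurd hxy ((EReal.bot_lt_coe p).not_ge)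
    | top => simp only; rw [EReal.coe_mul_top_of_pos hr]; exact le_top
    | coe q =>
      simp only
      rw [← EReal.coe_mul, ← EReal.coe_mul, EReal.coe_le_coe_iff]
      exact mul_le_mul_of_nonneg_left (by exact_mod_cast hxy) hr.le

private lemma measurable_ereal_const_mul (r : ℝ) :
    Measurable fun x : EReal => (r : EReal) * x := by
  rcases lt_trichotomy r 0 with h | h | h
  · exact (ereal_mul_anti h).measurable
  · subst h
    simp only [EReal.coe_zero, EReal.zero_mul]
    exact measurable_const
  · exact (ereal_mul_mono h).measurable

private lemma measurable_elog : Measurable elog := by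
  unfold elog
  exact Measurable.ite (measurableSet_le measurable_id measurable_const) measurable_const
    (continuous_coe_real_ereal.measurable.comp Real.measurable_log)

private lemma erealExp_anti {c : ℝ} (hc : 0 ≤ c) {x y : EReal} (hxy : x ≤ y) :
    erealExp (((-(2 * c) : ℝ) : EReal) * y) ≤ erealExp (((-(2 * c) : ℝ) : EReal) * x) := by
  rcases eq_or_lt_of_le hc with h0 | hpos
  · rw [← h0]
    norm_num
  · exact erealExp_mono' (ereal_mul_anti (by linarith : (-(2 * c) : ℝ) < 0) hxy)

private lemma exists_real_gt_ereal {x : EReal} (hx : x ≠ ⊤) : ∃ K : ℝ, x < (K : EReal) := by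
  induction x using EReal.rec with
  | bot => exact ⟨0, EReal.bot_lt_coe 0⟩
  | coe r => exact ⟨r + 1, by exact_mod_cast lt_add_one r⟩
  | top => exact absurd rfl hx

private lemma expStep {u v K : ℝ} (hu : 0 < u) (huv : u ≤ v) {x : EReal} (hx : x ≤ (K : EReal)) :
    erealExp (((-(2 * u) : ℝ) : EReal) * x) ≤
      ENNReal.ofReal (Real.exp (2 * (v - u) * K)) * erealExp (((-(2 * v) : ℝ) : EReal) * x) := by
  induction x using EReal.rec with
  | bot =>
    rw [EReal.coe_mul_bot_of_neg (by linarith : (-(2 * u) : ℝ) < 0),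
      EReal.coe_mul_bot_of_neg (by linarith : (-(2 * v) : ℝ) < 0), erealExp_top',
      ENNReal.mul_top (ne_of_gt (ENNReal.ofReal_pos.mpr (Real.exp_pos _)))]
  | top => exact absurd hx ((EReal.coe_lt_top K).not_ge)
  | coe r =>
    have hr : r ≤ K := by exact_mod_cast hx
    rw [← EReal.coe_mul, ← EReal.coe_mul, erealExp_coe', erealExp_coe',
      ← ENNReal.ofReal_mul (Real.exp_nonneg _), ← Real.exp_add]
    refine ENNReal.ofReal_le_ofReal (Real.exp_le_exp.mpr ?_)
    nlinarith [mul_le_mul_of_nonneg_left hr (by linarith : (0:ℝ) ≤ v - u)]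

private lemma pointwise_bound {n : ℕ} (φ : Cn n → EReal) {t s c₁ c c' γ a M K : ℝ}
    (hts : t < s) (hc₁pos : 0 < c₁) (hc₁c : c₁ ≤ c) (hγa : 0 < γ - a)
    (hMdef : M = (s - t) / (γ - a)) (hαc' : c₁ + (γ - a) ≤ c')
    (z : Cn n) (hzK : φ z < (K : EReal)) :
    ENNReal.ofReal (‖z‖ ^ (2 * t)) * erealExp (((-(2 * c₁) : ℝ) : EReal) * φ z) ≤
      ENNReal.ofReal (Real.exp (2 * (c - c₁) * K)) *
          (ENNReal.ofReal (‖z‖ ^ (2 * t)) *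
            erealExp (((-(2 * c) : ℝ) : EReal) * max (φ z) ((M : EReal) * elog ‖z‖))) +
        ENNReal.ofReal (Real.exp (2 * (c' - (c₁ + (γ - a))) * K)) *
          (ENNReal.ofReal (‖z‖ ^ (2 * s)) * erealExp (((-(2 * c') : ℝ) : EReal) * φ z)) := by
  have hM : 0 < M := hMdef ▸ div_pos (by linarith) hγa
  have hc'pos : 0 < c' := by linarith
  rcases le_or_gt ((M : EReal) * elog ‖z‖) (φ z) with hA | hB
  · rw [max_eq_left hA]
    refine le_trans ?_ le_self_add
    calc ENNReal.ofReal (‖z‖ ^ (2 * t)) * erealExp (((-(2 * c₁) : ℝ) : EReal) * φ z)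
        ≤ ENNReal.ofReal (‖z‖ ^ (2 * t)) *
            (ENNReal.ofReal (Real.exp (2 * (c - c₁) * K)) *
              erealExp (((-(2 * c) : ℝ) : EReal) * φ z)) :=
          mul_le_mul_right (expStep hc₁pos hc₁c hzK.le) _
      _ = _ := by ring
  · have hz0 : (0 : ℝ) < ‖z‖ := by
      by_contra h
      push_neg at h
      have hb : elog ‖z‖ = ⊥ := by simp [elog, h]
      rw [hb, EReal.coe_mul_bot_of_pos (by exact_mod_cast hM)] at hB
      exact absurd hB (by simp)
    set L := Real.log ‖z‖ with hL
    have helogz : elog ‖z‖ = (L : EReal) := by simp [elog, not_le.mpr hz0, hL]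
    rw [helogz] at hB
    refine le_trans ?_ le_add_self
    by_cases hbot : φ z = ⊥
    · rw [hbot, EReal.coe_mul_bot_of_neg (by linarith : (-(2 * c') : ℝ) < 0), erealExp_top',
        ENNReal.mul_top (ne_of_gt (ENNReal.ofReal_pos.mpr (Real.rpow_pos_of_pos hz0 _))),
        ENNReal.mul_top (ne_of_gt (ENNReal.ofReal_pos.mpr (Real.exp_pos _)))]
      exact le_top
    · have htop : φ z ≠ ⊤ := (hzK.trans (EReal.coe_lt_top K)).ne
      set r := (φ z).toReal with hrdef
      have hrz : (r : EReal) = φ z := EReal.coe_toReal htop hbot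
      rw [← hrz] at hzK hB ⊢
      have hrK : r ≤ K := by exact_mod_cast hzK.le
      have hrML : r < M * L := by
        rw [← EReal.coe_mul] at hB
        exact_mod_cast hB
      have hprod : (γ - a) * r < (s - t) * L := by
        have h1 : r < ((s - t) * L) / (γ - a) := by
          rwa [hMdef, div_mul_eq_mul_div] at hrML
        have h2 : r * (γ - a) < (s - t) * L := (lt_div_iff₀ hγa).mp h1
        linarith
      have hK2 : (c' - (c₁ + (γ - a))) * r ≤ (c' - (c₁ + (γ - a))) * K :=
        mul_le_mul_of_nonneg_left hrK (by linarith)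
      have hexp : Real.exp ((2 * t - 2 * s) * L) * Real.exp (-(2 * c₁) * r) ≤
          Real.exp (2 * (c' - (c₁ + (γ - a))) * K) * Real.exp (-(2 * c') * r) := by
        rw [← Real.exp_add, ← Real.exp_add]
        refine Real.exp_le_exp.mpr ?_
        nlinarith [hprod, hK2]
      have h2t : ‖z‖ ^ (2 * t) = ‖z‖ ^ (2 * s) * Real.exp ((2 * t - 2 * s) * L) := by
        rw [Real.rpow_def_of_pos hz0, Real.rpow_def_of_pos hz0, ← Real.exp_add, hL]
        ring_nf
      have hreal : ‖z‖ ^ (2 * t) * Real.exp (-(2 * c₁) * r) ≤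
          Real.exp (2 * (c' - (c₁ + (γ - a))) * K) * (‖z‖ ^ (2 * s) * Real.exp (-(2 * c') * r)) := by
        calc ‖z‖ ^ (2 * t) * Real.exp (-(2 * c₁) * r)
            = ‖z‖ ^ (2 * s) * (Real.exp ((2 * t - 2 * s) * L) * Real.exp (-(2 * c₁) * r)) := by
              rw [h2t]; ring
          _ ≤ ‖z‖ ^ (2 * s) *
                (Real.exp (2 * (c' - (c₁ + (γ - a))) * K) * Real.exp (-(2 * c') * r)) :=
              mul_le_mul_of_nonneg_left hexp (Real.rpow_nonneg (norm_nonneg z) _)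
          _ = _ := by ring
      calc ENNReal.ofReal (‖z‖ ^ (2 * t)) * erealExp (((-(2 * c₁) : ℝ) : EReal) * (r : EReal))
          = ENNReal.ofReal (‖z‖ ^ (2 * t) * Real.exp (-(2 * c₁) * r)) := by
            rw [← EReal.coe_mul, erealExp_coe',
              ENNReal.ofReal_mul (Real.rpow_nonneg (norm_nonneg z) _)]
        _ ≤ ENNReal.ofReal (Real.exp (2 * (c' - (c₁ + (γ - a))) * K) *
              (‖z‖ ^ (2 * s) * Real.exp (-(2 * c') * r))) := ENNReal.ofReal_le_ofReal hreal
        _ = ENNReal.ofReal (Real.exp (2 * (c' - (c₁ + (γ - a))) * K)) *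
              (ENNReal.ofReal (‖z‖ ^ (2 * s)) * erealExp (((-(2 * c') : ℝ) : EReal) * (r : EReal))) := by
            rw [← EReal.coe_mul, erealExp_coe',
              ENNReal.ofReal_mul (Real.exp_nonneg _),
              ENNReal.ofReal_mul (Real.rpow_nonneg (norm_nonneg z) _)]

private instance Cn.borelSpace (n : ℕ) : BorelSpace (Cn n) :=
  ⟨(inferInstance : BorelSpace (PiLp 2 (fun _ : Fin n => ℂ))).measurable_eq⟩

/-- Let `ν_φ(0) > 0`, `s > t > -n` with `a := c_t(φ) < c_s(φ)`. Then for every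
`γ` with `a < γ < c_s(φ)`, the function `φ_γ := max{φ, ((s-t)/(γ-a))·log‖z‖}` satisfies
`c_t(φ_γ) = a`. -/
theorem statement8 {n : ℕ} (hn : 0 < n) (Ω : Set (Cn n)) (hΩ : IsCnDomain Ω)
    (h0 : (0 : Cn n) ∈ Ω) (φ : Cn n → EReal) (hφ : PshOn φ Ω) (hν : 0 < lelong φ)
    (s t : ℝ) (hst : t < s) (ht : -(n : ℝ) < t) (hlt : lct t φ < lct s φ)
    (γ : ℝ) (hγ1 : lct t φ < ENNReal.ofReal γ) (hγ2 : ENNReal.ofReal γ < lct s φ) :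
    lct t (fun z : Cn n =>
        max (φ z) ((((s - t) / (γ - (lct t φ).toReal) : ℝ) : EReal) * elog ‖z‖))
      = lct t φ := by
  classical
  have hlcttop : lct t φ ≠ ⊤ := ne_top_of_lt hγ1
  set a := (lct t φ).toReal with ha
  have hγpos : 0 < γ := by
    by_contra h
    push_neg at h
    rw [ENNReal.ofReal_eq_zero.mpr h] at hγ1
    exact (not_lt.mpr zero_le) hγ1
  have haγ : a < γ := (ENNReal.lt_ofReal_iff_toReal_lt hlcttop).mp hγ1
  have ha0 : 0 ≤ a := ENNReal.toReal_nonneg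
  set M := (s - t) / (γ - a) with hMdef
  have hM : 0 < M := div_pos (by linarith) (by linarith)
  refine le_antisymm ?_ ?_
  · -- hard direction : lct t φγ ≤ lct t φ
    refine iSup₂_le fun c hc => ?_
    by_contra hcon
    push_neg at hcon
    have hac : a < c := (ENNReal.lt_ofReal_iff_toReal_lt hlcttop).mp hcon
    obtain ⟨c', hc'mem, hγc'⟩ : ∃ c' : ℝ, (0 ≤ c' ∧ lctIntegrable s c' φ) ∧ γ < c' := by
      by_contra h
      push_neg at h
      have hle : lct s φ ≤ ENNReal.ofReal γ :=
        iSup₂_le fun c' hc' => ENNReal.ofReal_le_ofReal (h c' hc')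
      exact absurd hγ2 (not_lt.mpr hle)
    obtain ⟨hc'0, hc'int⟩ := hc'mem
    set c₁ := min c (a + (c' - γ)) with hc₁def
    have hac₁ : a < c₁ := lt_min hac (by linarith)
    have hc₁c : c₁ ≤ c := min_le_left _ _
    have hc₁pos : 0 < c₁ := lt_of_le_of_lt ha0 hac₁
    have hαc' : c₁ + (γ - a) ≤ c' := by
      have h1 : c₁ ≤ a + (c' - γ) := min_le_right _ _
      linarith
    obtain ⟨K, hK⟩ : ∃ K : ℝ, φ 0 < (K : EReal) := exists_real_gt_ereal (hφ.2.2.1 0 h0)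
    have hev : {z : Cn n | φ z < (K : EReal)} ∈ 𝓝 (0 : Cn n) := by
      have h1 := hφ.1 0 h0 (K : EReal) hK
      rwa [nhdsWithin_eq_nhds.mpr (hΩ.1.mem_nhds h0)] at h1
    obtain ⟨U₁, hU₁, hI₁⟩ := hc.2
    obtain ⟨U₂, hU₂, hI₂⟩ := hc'int
    have hnhd : U₁ ∩ U₂ ∩ {z : Cn n | φ z < (K : EReal)} ∩ Ω ∈ 𝓝 (0 : Cn n) :=
      Filter.inter_mem (Filter.inter_mem (Filter.inter_mem hU₁ hU₂) hev) (hΩ.1.mem_nhds h0)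
    obtain ⟨B, hBsub, hBopen, hB0⟩ := _root_.mem_nhds_iff.mp hnhd
    have hBmeas : MeasurableSet B := hBopen.measurableSet
    have hBΩ : B ⊆ Ω := fun z hz => (hBsub hz).2
    have hBK : ∀ z ∈ B, φ z < (K : EReal) := fun z hz => (hBsub hz).1.2
    have hBU₁ : B ⊆ U₁ := fun z hz => (hBsub hz).1.1.1
    have hBU₂ : B ⊆ U₂ := fun z hz => (hBsub hz).1.1.2
    set ψ : Cn n → EReal := fun z => if z ∈ B then φ z else 0 with hψdef
    have hopenlt : ∀ y : EReal, IsOpen {z | z ∈ B ∧ φ z < y} := by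
      intro y
      rw [isOpen_iff_mem_nhds]
      rintro z ⟨hzB, hzy⟩
      have h1 : ∀ᶠ w in 𝓝[Ω] z, φ w < y := hφ.1 z (hBΩ hzB) y hzy
      rw [nhdsWithin_eq_nhds.mpr (hΩ.1.mem_nhds (hBΩ hzB))] at h1
      filter_upwards [h1, hBopen.mem_nhds hzB] with w hw1 hw2
      exact ⟨hw2, hw1⟩
    have hψmeas : Measurable ψ := by
      apply measurable_of_Iio
      intro y
      by_cases hy : (0 : EReal) < y
      · have heq : ψ ⁻¹' Set.Iio y = {z | z ∈ B ∧ φ z < y} ∪ Bᶜ := by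
          ext z; by_cases hz : z ∈ B <;> simp [hψdef, hz, hy]
        rw [heq]
        exact ((hopenlt y).measurableSet).union hBmeas.compl
      · have heq : ψ ⁻¹' Set.Iio y = {z | z ∈ B ∧ φ z < y} := by
          ext z; by_cases hz : z ∈ B <;> simp [hψdef, hz, hy]
        rw [heq]
        exact (hopenlt y).measurableSet
    set G₁ : Cn n → ℝ≥0∞ := fun z => ENNReal.ofReal (‖z‖ ^ (2 * t)) *
        erealExp (((-(2 * c) : ℝ) : EReal) * max (ψ z) ((M : EReal) * elog ‖z‖)) with hG₁def
    set G₂ : Cn n → ℝ≥0∞ := fun z => ENNReal.ofReal (‖z‖ ^ (2 * s)) *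
        erealExp (((-(2 * c') : ℝ) : EReal) * ψ z) with hG₂def
    set C₁ := ENNReal.ofReal (Real.exp (2 * (c - c₁) * K)) with hC₁def
    set C₂ := ENNReal.ofReal (Real.exp (2 * (c' - (c₁ + (γ - a))) * K)) with hC₂def
    have hnorm_meas : ∀ u : ℝ, Measurable fun z : Cn n => ENNReal.ofReal (‖z‖ ^ u) :=
      fun u => ENNReal.measurable_ofReal.comp (continuous_norm.measurable.pow measurable_const)
    have hG₁meas : Measurable G₁ :=
      (hnorm_meas _).mul (erealExp_mono'.measurable.comp ((measurable_ereal_const_mul _).comp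
        (hψmeas.max ((measurable_ereal_const_mul M).comp
          (measurable_elog.comp continuous_norm.measurable)))))
    have hcong₁ : ∫⁻ z in B, G₁ z ∂volume =
        ∫⁻ z in B, ENNReal.ofReal (‖z‖ ^ (2 * t)) *
          erealExp (((-(2 * c) : ℝ) : EReal) * max (φ z) ((M : EReal) * elog ‖z‖)) ∂volume := by
      refine lintegral_congr_ae (((ae_restrict_mem hBmeas).mono fun z hz => ?_))
      simp only [hG₁def, hψdef, if_pos hz]
    have hcong₂ : ∫⁻ z in B, G₂ z ∂volume =
        ∫⁻ z in B, ENNReal.ofReal (‖z‖ ^ (2 * s)) *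
          erealExp (((-(2 * c') : ℝ) : EReal) * φ z) ∂volume := by
      refine lintegral_congr_ae (((ae_restrict_mem hBmeas).mono fun z hz => ?_))
      simp only [hG₂def, hψdef, if_pos hz]
    have hfin₁ : ∫⁻ z in B, G₁ z ∂volume < ⊤ := by
      rw [hcong₁]
      exact lt_of_le_of_lt (lintegral_mono' (Measure.restrict_mono hBU₁ le_rfl) le_rfl) hI₁
    have hfin₂ : ∫⁻ z in B, G₂ z ∂volume < ⊤ := by
      rw [hcong₂]
      exact lt_of_le_of_lt (lintegral_mono' (Measure.restrict_mono hBU₂ le_rfl) le_rfl) hI₂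
    have hmain : lctIntegrable t c₁ φ := by
      refine ⟨B, hBopen.mem_nhds hB0, ?_⟩
      have hae : ∀ᵐ z ∂(volume.restrict B),
          ENNReal.ofReal (‖z‖ ^ (2 * t)) * erealExp (((-(2 * c₁) : ℝ) : EReal) * φ z)
            ≤ C₁ * G₁ z + C₂ * G₂ z := by
        filter_upwards [ae_restrict_mem hBmeas] with z hz
        have hψz : ψ z = φ z := if_pos hz
        simp only [hG₁def, hG₂def, hC₁def, hC₂def, hψz]
        exact pointwise_bound φ hst hc₁pos hc₁c (by linarith : 0 < γ - a) hMdef hαc' z (hBK z hz)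
      calc ∫⁻ z in B, ENNReal.ofReal (‖z‖ ^ (2 * t)) *
              erealExp (((-(2 * c₁) : ℝ) : EReal) * φ z) ∂volume
          ≤ ∫⁻ z in B, (C₁ * G₁ z + C₂ * G₂ z) ∂volume := lintegral_mono_ae hae
        _ = C₁ * ∫⁻ z in B, G₁ z ∂volume + C₂ * ∫⁻ z in B, G₂ z ∂volume := by
            rw [lintegral_add_left' ((hG₁meas.const_mul C₁).aemeasurable),
              lintegral_const_mul' C₁ _ ENNReal.ofReal_ne_top,
              lintegral_const_mul' C₂ _ ENNReal.ofReal_ne_top]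
        _ < ⊤ := ENNReal.add_lt_top.mpr
            ⟨ENNReal.mul_lt_top ENNReal.ofReal_lt_top hfin₁,
              ENNReal.mul_lt_top ENNReal.ofReal_lt_top hfin₂⟩
    have hle : ENNReal.ofReal c₁ ≤ lct t φ :=
      le_iSup₂ (f := fun (c : ℝ) (_ : c ∈ {c : ℝ | 0 ≤ c ∧ lctIntegrable t c φ}) =>
        ENNReal.ofReal c) c₁ ⟨hc₁pos.le, hmain⟩
    have hcontra : lct t φ < ENNReal.ofReal c₁ :=
      (ENNReal.lt_ofReal_iff_toReal_lt hlcttop).mpr hac₁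
    exact absurd hle (not_le.mpr hcontra)
  · -- easy direction : lct t φ ≤ lct t φγ
    refine iSup₂_le fun c hc => ?_
    refine le_iSup₂ (f := fun (c : ℝ) (_ : c ∈ {c : ℝ | 0 ≤ c ∧
      lctIntegrable t c (fun z : Cn n => max (φ z) ((M : EReal) * elog ‖z‖))}) =>
        ENNReal.ofReal c) c ⟨hc.1, ?_⟩
    obtain ⟨U, hU, hI⟩ := hc.2
    refine ⟨U, hU, lt_of_le_of_lt (lintegral_mono fun z => ?_) hI⟩
    exact mul_le_mul_right (erealExp_anti hc.1 (le_max_left _ _)) _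


end
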